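/- Let B be any (open or closed) ball in the Heisenberg group H^n with the Carnot-Carathéodory distance. If p, q ∈ B satisfy z_p = z_q (they have the same C^n-component), then the vertical segment L_{p,q} = {[z_p, t] : min(t_p,t_q) ≤ t ≤ max(t_p,t_q)} is contained in B. -/

import Mathlib

open scoped Real ENNReal
open MeasureTheory

noncomputable section

/-- The Heisenberg group `ℍⁿ`, identified with `ℂⁿ × ℝ` (with the Euclidean `ℓ²` norm on
the `ℂⁿ` factor). -/
abbrev Heis (n : ℕ) : Type := EuclideanSpace ℂ (Fin n) × ℝ

/-- Borel σ-algebra on `ℂⁿ`. -/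
instance (n : ℕ) : MeasurableSpace (EuclideanSpace ℂ (Fin n)) := borel _

instance (n : ℕ) : BorelSpace (EuclideanSpace ℂ (Fin n)) := ⟨rfl⟩

/-- Lebesgue measure on `ℂⁿ`. -/
instance (n : ℕ) : MeasureSpace (EuclideanSpace ℂ (Fin n)) :=
  ⟨Measure.map ((WithLp.equiv 2 (Fin n → ℂ)).symm) volume⟩

namespace Heis

/-- The Hermitian product `z ⬝ conj w = ∑ zⱼ conj(wⱼ)`. -/
def herm {n : ℕ} (z w : EuclideanSpace ℂ (Fin n)) : ℂ :=
  ∑ j, z j * (starRingEnd ℂ) (w j)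

/-- The Heisenberg group law `[z,t]·[z',t'] = [z+z', t+t'+2 Im (z ⬝ conj z')]`. -/
def mul {n : ℕ} (p q : Heis n) : Heis n :=
  (p.1 + q.1, p.2 + q.2 + 2 * (herm p.1 q.1).im)

/-- Dilations `δ_λ [z,t] = [λ z, λ² t]`. -/
def dilation {n : ℕ} (l : ℝ) (p : Heis n) : Heis n := (l • p.1, l ^ 2 * p.2)

/-- A `C¹` horizontal curve in the Heisenberg group: at every point the tangent vector lies
in the horizontal subbundle spanned by the left-invariant fields
`X_j = ∂_{x_j} + 2 y_j ∂_t`, `Y_j = ∂_{y_j} - 2 x_j ∂_t`, which amounts to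
`t'(s) = 2 Im (z(s) ⬝ conj z'(s))`. -/
structure HorizCurve (n : ℕ) where
  z : ℝ → EuclideanSpace ℂ (Fin n)
  t : ℝ → ℝ
  z' : ℝ → EuclideanSpace ℂ (Fin n)
  hz : ∀ s : ℝ, HasDerivAt z (z' s) s
  ht : ∀ s : ℝ, HasDerivAt t (2 * (herm (z s) (z' s)).im) s
  hz' : Continuous z'

/-- The sub-Riemannian length of a horizontal curve (the metric `g` makes the horizontal
frame orthonormal, so the length is the integral of the Euclidean norm of `z'`). -/
def HorizCurve.length {n : ℕ} (γ : HorizCurve n) : ℝ :=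
  ∫ s in (0:ℝ)..1, ‖γ.z' s‖

/-- The Carnot–Carathéodory distance: the infimum of lengths of horizontal curves
joining `p` to `q`. -/
def ccDist {n : ℕ} (p q : Heis n) : ℝ :=
  sInf { L : ℝ | ∃ γ : HorizCurve n, γ.z 0 = p.1 ∧ γ.t 0 = p.2 ∧
      γ.z 1 = q.1 ∧ γ.t 1 = q.2 ∧ L = γ.length }

/-- Open CC-ball. -/
def ccBall {n : ℕ} (p : Heis n) (r : ℝ) : Set (Heis n) := { q | ccDist p q < r }

/-- Closed CC-ball. -/
def ccClosedBall {n : ℕ} (p : Heis n) (r : ℝ) : Set (Heis n) := { q | ccDist p q ≤ r }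

/-- CC-diameter of a set. -/
def ccDiam {n : ℕ} (F : Set (Heis n)) : ℝ :=
  sSup { r : ℝ | ∃ p ∈ F, ∃ q ∈ F, r = ccDist p q }

/-- A set is CC-bounded if the pairwise CC-distances of its points are bounded. -/
def ccBounded {n : ℕ} (F : Set (Heis n)) : Prop :=
  ∃ M : ℝ, ∀ p ∈ F, ∀ q ∈ F, ccDist p q ≤ M

/-- The vertical segment joining two points with the same `ℂⁿ`-component. -/
def vseg {n : ℕ} (p q : Heis n) : Set (Heis n) :=
  { x | x.1 = p.1 ∧ x.2 ∈ Set.uIcc p.2 q.2 }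

/-- The `t`-convex hull of a set. -/
def tco {n : ℕ} (F : Set (Heis n)) : Set (Heis n) :=
  { x | ∃ p₁ ∈ F, ∃ p₂ ∈ F, p₁.1 = p₂.1 ∧ x ∈ vseg p₁ p₂ }

/-- A set is `t`-convex if it contains the vertical segment joining any two of its points
having the same `ℂⁿ`-component. -/
def TConvex {n : ℕ} (E : Set (Heis n)) : Prop :=
  ∀ p ∈ E, ∀ q ∈ E, p.1 = q.1 → vseg p q ⊆ E

/-- The rotation `r_θ [z,t] = [(e^{iθ₁} z₁, …, e^{iθₙ} zₙ), t]`. -/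
def rot {n : ℕ} (θ : Fin n → ℝ) (p : Heis n) : Heis n :=
  ((WithLp.equiv 2 (Fin n → ℂ)).symm fun j => Complex.exp ((θ j : ℂ) * Complex.I) * p.1 j,
    p.2)

/-- Rotationally invariant sets: the class `𝓡`. -/
def RotInvariant {n : ℕ} (F : Set (Heis n)) : Prop :=
  ∀ θ : Fin n → ℝ, rot θ '' F ⊆ F

/-- The reflection `σ [z,t] = [conj z, t]`. -/
def sigmaRefl {n : ℕ} (p : Heis n) : Heis n :=
  ((WithLp.equiv 2 (Fin n → ℂ)).symm fun j => (starRingEnd ℂ) (p.1 j), p.2)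

/-- The Steiner symmetrization of a set with respect to the `ℂⁿ`-plane. -/
def steiner {n : ℕ} (F : Set (Heis n)) : Set (Heis n) :=
  { x | x.1 ∈ Prod.fst '' F ∧
      2 * |x.2| ≤ (volume { s : ℝ | ((x.1, s) : Heis n) ∈ F }).toReal }

/-- The isodiametric constant `C_I`. -/
def CI (n : ℕ) : ℝ :=
  sSup { x : ℝ | ∃ F : Set (Heis n), ccBounded F ∧ 0 < ccDiam F ∧
    x = (volume F).toReal / (ccDiam F) ^ (2 * n + 2) }

/-- The isodiametric constant `C_{I,𝓡}` for the restricted problem in the class `𝓡`. -/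
def CIR (n : ℕ) : ℝ :=
  sSup { x : ℝ | ∃ F : Set (Heis n), RotInvariant F ∧ ccBounded F ∧ 0 < ccDiam F ∧
    x = (volume F).toReal / (ccDiam F) ^ (2 * n + 2) }

end Heis


namespace HeisAux

open Complex

variable {n : ℕ}

abbrev E (n : ℕ) := EuclideanSpace ℂ (Fin n)

lemma herm_add_left (x y v : E n) :
    Heis.herm (x + y) v = Heis.herm x v + Heis.herm y v := by
  simp [Heis.herm, PiLp.add_apply, add_mul, Finset.sum_add_distrib]

lemma herm_add_right (x y v : E n) :
    Heis.herm x (y + v) = Heis.herm x y + Heis.herm x v := by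
  simp [Heis.herm, PiLp.add_apply, map_add, mul_add, Finset.sum_add_distrib]

lemma herm_smul_left (c : ℂ) (x v : E n) :
    Heis.herm (c • x) v = c * Heis.herm x v := by
  simp [Heis.herm, PiLp.smul_apply, smul_eq_mul, Finset.mul_sum, mul_assoc]

lemma herm_smul_right (c : ℂ) (x v : E n) :
    Heis.herm x (c • v) = (starRingEnd ℂ) c * Heis.herm x v := by
  rw [Heis.herm, Heis.herm, Finset.mul_sum]
  refine Finset.sum_congr rfl fun j _ => ?_
  simp only [PiLp.smul_apply, smul_eq_mul, map_mul]
  ring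

lemma herm_real_smul_left (r : ℝ) (x v : E n) :
    Heis.herm (r • x) v = (r : ℂ) * Heis.herm x v := by
  have : r • x = (r : ℂ) • x := by
    ext j
    simp [PiLp.smul_apply, Complex.real_smul]
  rw [this, herm_smul_left]

lemma herm_real_smul_right (r : ℝ) (x v : E n) :
    Heis.herm x (r • v) = (r : ℂ) * Heis.herm x v := by
  have : r • v = (r : ℂ) • v := by
    ext j
    simp [PiLp.smul_apply, Complex.real_smul]
  rw [this, herm_smul_right, Complex.conj_ofReal]

lemma herm_self_im (x : E n) : (Heis.herm x x).im = 0 := by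
  simp [Heis.herm, Complex.mul_conj]

lemma herm_single_self (i : Fin n) :
    Heis.herm (EuclideanSpace.single i (1:ℂ)) (EuclideanSpace.single i (1:ℂ)) = 1 := by
  simp [Heis.herm, EuclideanSpace.single_apply, apply_ite, Finset.sum_ite_eq]

lemma continuous_herm : Continuous fun p : E n × E n => Heis.herm p.1 p.2 := by
  unfold Heis.herm
  refine continuous_finset_sum _ fun j _ => ?_
  exact ((PiLp.continuous_apply 2 _ j).comp continuous_fst).mul
    (Complex.continuous_conj.comp ((PiLp.continuous_apply 2 _ j).comp continuous_snd))

lemma continuous_herm_comp {f g : ℝ → E n} (hf : Continuous f) (hg : Continuous g) :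
    Continuous fun s => Heis.herm (f s) (g s) :=
  continuous_herm.comp (hf.prodMk hg)

lemma length_nonneg (γ : Heis.HorizCurve n) : 0 ≤ γ.length :=
  intervalIntegral.integral_nonneg (by norm_num) fun u _ => norm_nonneg _

/-- The set of lengths of horizontal curves joining `p` and `q`. -/
def S (p q : Heis n) : Set ℝ :=
  { L : ℝ | ∃ γ : Heis.HorizCurve n, γ.z 0 = p.1 ∧ γ.t 0 = p.2 ∧
      γ.z 1 = q.1 ∧ γ.t 1 = q.2 ∧ L = γ.length }

lemma ccDist_eq (p q : Heis n) : Heis.ccDist p q = sInf (S p q) := rfl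

lemma bddBelow_S (p q : Heis n) : BddBelow (S p q) := by
  refine ⟨0, fun L hL => ?_⟩
  obtain ⟨γ, _, _, _, _, rfl⟩ := hL
  exact length_nonneg γ

/-- generic polynomial of degree ≤ 8 in the complexification of a real variable -/
def poly8 (a0 a1 a2 a3 a4 a5 a6 a7 a8 : ℂ) (s : ℝ) : ℂ :=
  a0 + a1*(s:ℂ) + a2*(s:ℂ)^2 + a3*(s:ℂ)^3 + a4*(s:ℂ)^4 + a5*(s:ℂ)^5 + a6*(s:ℂ)^6
    + a7*(s:ℂ)^7 + a8*(s:ℂ)^8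

lemma poly8_hasDerivAt (a0 a1 a2 a3 a4 a5 a6 a7 a8 : ℂ) (s : ℝ) :
    HasDerivAt (poly8 a0 a1 a2 a3 a4 a5 a6 a7 a8)
      (poly8 a1 (2*a2) (3*a3) (4*a4) (5*a5) (6*a6) (7*a7) (8*a8) 0 s) s := by
  have h : HasDerivAt (fun w : ℂ => a0 + a1*w + a2*w^2 + a3*w^3 + a4*w^4 + a5*w^5
      + a6*w^6 + a7*w^7 + a8*w^8)
      (a1 + 2*a2*(s:ℂ) + 3*a3*(s:ℂ)^2 + 4*a4*(s:ℂ)^3 + 5*a5*(s:ℂ)^4 + 6*a6*(s:ℂ)^5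
        + 7*a7*(s:ℂ)^6 + 8*a8*(s:ℂ)^7) (s:ℂ) := by
    have hbase : ∀ k : ℕ, HasDerivAt (fun w : ℂ => w ^ k) (k * (s:ℂ)^(k-1)) (s:ℂ) :=
      fun k => hasDerivAt_pow k _
    have h1 := (hasDerivAt_const (s:ℂ) a0).add ((hbase 1).const_mul a1)
    have h2 := h1.add ((hbase 2).const_mul a2)
    have h3 := h2.add ((hbase 3).const_mul a3)
    have h4 := h3.add ((hbase 4).const_mul a4)
    have h5 := h4.add ((hbase 5).const_mul a5)
    have h6 := h5.add ((hbase 6).const_mul a6)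
    have h7 := h6.add ((hbase 7).const_mul a7)
    have h8 := h7.add ((hbase 8).const_mul a8)
    convert h8 using 1
    · rfl
    · rfl
    · funext w
      simp
    · norm_num
      ring
  have := h.comp_ofReal
  unfold poly8
  convert this using 1
  ring

lemma poly8_continuous (a0 a1 a2 a3 a4 a5 a6 a7 a8 : ℂ) :
    Continuous (poly8 a0 a1 a2 a3 a4 a5 a6 a7 a8) := by
  unfold poly8
  fun_prop

lemma hasDerivAt_deriv_congr {f : ℝ → ℂ} {a b : ℂ} {x : ℝ}
    (h : HasDerivAt f a x) (e : b = a) : HasDerivAt f b x := e ▸ h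

end HeisAux
namespace HeisAux

open Complex

variable {n : ℕ}

lemma cont_z (γ : Heis.HorizCurve n) : Continuous γ.z :=
  Differentiable.continuous (fun s => (γ.hz s).differentiableAt)

/-- Convex interpolation between two horizontal curves with common endpoints in the
`ℂⁿ` component. -/
lemma interp (γ₁ γ₂ : Heis.HorizCurve n) (h0z : γ₁.z 0 = γ₂.z 0) (h0t : γ₁.t 0 = γ₂.t 0)
    (h1z : γ₁.z 1 = γ₂.z 1) (τ : ℝ) (hτ : τ ∈ Set.uIcc (γ₁.t 1) (γ₂.t 1)) :
    ∃ γ : Heis.HorizCurve n, γ.z 0 = γ₁.z 0 ∧ γ.t 0 = γ₁.t 0 ∧ γ.z 1 = γ₁.z 1 ∧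
      γ.t 1 = τ ∧ γ.length ≤ max γ₁.length γ₂.length := by
  classical
  set d : ℝ → E n := fun s => γ₂.z s - γ₁.z s with hd
  set d' : ℝ → E n := fun s => γ₂.z' s - γ₁.z' s with hd'
  have hdc : Continuous d := (cont_z γ₂).sub (cont_z γ₁)
  have hdc' : Continuous d' := γ₂.hz'.sub γ₁.hz'
  set A : ℝ → ℝ := fun s => 2 * (Heis.herm (γ₁.z s) (γ₁.z' s)).im with hA
  set Bf : ℝ → ℝ := fun s =>
    2 * (Heis.herm (γ₁.z s) (d' s) + Heis.herm (d s) (γ₁.z' s)).im with hBf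
  set Cf : ℝ → ℝ := fun s => 2 * (Heis.herm (d s) (d' s)).im with hCf
  have hAc : Continuous A :=
    continuous_const.mul (Complex.continuous_im.comp (continuous_herm_comp (cont_z γ₁) γ₁.hz'))
  have hBc : Continuous Bf :=
    continuous_const.mul (Complex.continuous_im.comp ((continuous_herm_comp (cont_z γ₁) hdc').add
      (continuous_herm_comp hdc γ₁.hz')))
  have hCc : Continuous Cf :=
    continuous_const.mul (Complex.continuous_im.comp (continuous_herm_comp hdc hdc'))
  -- the expansion of the integrand
  have key : ∀ l s : ℝ, 2 * (Heis.herm (γ₁.z s + l • d s) (γ₁.z' s + l • d' s)).im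
      = A s + l * Bf s + l^2 * Cf s := by
    intro l s
    rw [herm_add_left, herm_add_right, herm_add_right, herm_real_smul_left,
      herm_real_smul_left, herm_real_smul_right, herm_real_smul_right]
    simp only [hA, hBf, hCf, Complex.add_im, Complex.mul_im, Complex.ofReal_re,
      Complex.ofReal_im]
    ring
  set iA : ℝ := ∫ s in (0:ℝ)..1, A s with hiA
  set iB : ℝ := ∫ s in (0:ℝ)..1, Bf s with hiB
  set iC : ℝ := ∫ s in (0:ℝ)..1, Cf s with hiC
  set T : ℝ → ℝ := fun l => iA + l * iB + l^2 * iC with hT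
  have hTl : ∀ l : ℝ, (∫ s in (0:ℝ)..1, (A s + l * Bf s + l^2 * Cf s)) = T l := by
    intro l
    rw [intervalIntegral.integral_add (f := fun s => A s + l * Bf s) (g := fun s => l^2 * Cf s)
        (((hAc.add (continuous_const.mul hBc)).intervalIntegrable 0 1))
        ((continuous_const.mul hCc).intervalIntegrable 0 1),
      intervalIntegral.integral_add (f := A) (g := fun s => l * Bf s) (hAc.intervalIntegrable 0 1)
        ((continuous_const.mul hBc).intervalIntegrable 0 1)]
    simp only [hT, intervalIntegral.integral_const_mul]
    rfl
  have hT0 : T 0 = γ₁.t 1 - γ₁.t 0 := by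
    have h0 : iA = γ₁.t 1 - γ₁.t 0 := by
      rw [hiA]
      exact intervalIntegral.integral_eq_sub_of_hasDerivAt (fun s _ => γ₁.ht s)
        (hAc.intervalIntegrable 0 1)
    simp [hT, h0]
  have hT1 : T 1 = γ₂.t 1 - γ₁.t 0 := by
    have e1 : ∀ s : ℝ, A s + (1:ℝ) * Bf s + (1:ℝ)^2 * Cf s
        = 2 * (Heis.herm (γ₂.z s) (γ₂.z' s)).im := by
      intro s
      rw [← key 1 s]
      have e2 : γ₁.z s + (1:ℝ) • d s = γ₂.z s := by simp [hd]
      have e3 : γ₁.z' s + (1:ℝ) • d' s = γ₂.z' s := by simp [hd']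
      rw [e2, e3]
    have h1 : (∫ s in (0:ℝ)..1, (A s + (1:ℝ) * Bf s + (1:ℝ)^2 * Cf s)) = γ₂.t 1 - γ₂.t 0 := by
      rw [intervalIntegral.integral_congr (g := fun s => 2 * (Heis.herm (γ₂.z s) (γ₂.z' s)).im)
        (fun s _ => e1 s)]
      exact intervalIntegral.integral_eq_sub_of_hasDerivAt (fun s _ => γ₂.ht s)
        ((continuous_const.mul (Complex.continuous_im.comp
          (continuous_herm_comp (cont_z γ₂) γ₂.hz'))).intervalIntegrable 0 1)
    rw [hTl 1] at h1
    rw [h1, h0t]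
  -- intermediate value theorem
  have hmem : τ - γ₁.t 0 ∈ Set.uIcc (T 0) (T 1) := by
    rw [hT0, hT1]
    rcases Set.mem_uIcc.1 hτ with ⟨h1, h2⟩ | ⟨h1, h2⟩
    · exact Set.mem_uIcc.2 (Or.inl ⟨by linarith, by linarith⟩)
    · exact Set.mem_uIcc.2 (Or.inr ⟨by linarith, by linarith⟩)
  have hTc : Continuous T := by fun_prop
  obtain ⟨l, hl, hTeq⟩ := intermediate_value_uIcc (hTc.continuousOn (s := Set.uIcc 0 1)) hmem
  rw [Set.uIcc_of_le (by norm_num : (0:ℝ) ≤ 1)] at hl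
  obtain ⟨hl0, hl1⟩ := hl
  -- the interpolated curve
  set F : ℝ → ℝ := fun s => A s + l * Bf s + l^2 * Cf s with hF
  have hFc : Continuous F := (hAc.add (continuous_const.mul hBc)).add
    (continuous_const.mul hCc)
  set Zf : ℝ → E n := fun s => γ₁.z s + l • d s with hZf
  set Zf' : ℝ → E n := fun s => γ₁.z' s + l • d' s with hZf'
  set tf : ℝ → ℝ := fun s => γ₁.t 0 + ∫ u in (0:ℝ)..s, F u with htf
  have hγz : ∀ s, HasDerivAt Zf (Zf' s) s := fun s =>
    (γ₁.hz s).add (((γ₂.hz s).sub (γ₁.hz s)).const_smul l)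
  have hγt : ∀ s : ℝ, HasDerivAt tf (2 * (Heis.herm (Zf s) (Zf' s)).im) s := by
    intro s
    have h1 : HasDerivAt tf (F s) s :=
      ((hFc.integral_hasStrictDerivAt 0 s).hasDerivAt).const_add (γ₁.t 0)
    have h2 : 2 * (Heis.herm (Zf s) (Zf' s)).im = F s := key l s
    rw [h2]
    exact h1
  set γ : Heis.HorizCurve n :=
    { z := Zf, t := tf, z' := Zf', hz := hγz, ht := hγt,
      hz' := γ₁.hz'.add (hdc'.const_smul l) } with hγ
  have hz0 : γ.z 0 = γ₁.z 0 := by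
    show Zf 0 = γ₁.z 0
    simp [hZf, hd, ← h0z]
  have hz1 : γ.z 1 = γ₁.z 1 := by
    show Zf 1 = γ₁.z 1
    simp [hZf, hd, ← h1z]
  have ht0 : γ.t 0 = γ₁.t 0 := by
    show tf 0 = γ₁.t 0
    simp [htf]
  have ht1 : γ.t 1 = τ := by
    show tf 1 = τ
    rw [htf]
    simp only
    rw [hTl l, hTeq]
    ring
  refine ⟨γ, hz0, ht0, hz1, ht1, ?_⟩
  -- the length estimate
  have hlen : γ.length ≤ (1 - l) * γ₁.length + l * γ₂.length := by
    have hmono : ∀ s ∈ Set.Icc (0:ℝ) 1,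
        ‖Zf' s‖ ≤ (1 - l) * ‖γ₁.z' s‖ + l * ‖γ₂.z' s‖ := by
      intro s _
      have hEq : Zf' s = (1 - l) • γ₁.z' s + l • γ₂.z' s := by
        simp only [hZf', hd']
        rw [smul_sub, sub_smul, one_smul]
        abel
      rw [hEq]
      refine (norm_add_le _ _).trans ?_
      rw [norm_smul, norm_smul, Real.norm_eq_abs, Real.norm_eq_abs,
        _root_.abs_of_nonneg (by linarith), _root_.abs_of_nonneg hl0]
    have hInt : (∫ s in (0:ℝ)..1, ‖Zf' s‖)
        ≤ ∫ s in (0:ℝ)..1, ((1 - l) * ‖γ₁.z' s‖ + l * ‖γ₂.z' s‖) := by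
      refine intervalIntegral.integral_mono_on (by norm_num) ?_ ?_ hmono
      · exact ((γ₁.hz'.add (hdc'.const_smul l)).norm).intervalIntegrable 0 1
      · exact ((continuous_const.mul γ₁.hz'.norm).add
          (continuous_const.mul γ₂.hz'.norm)).intervalIntegrable 0 1
    have hsplit : (∫ s in (0:ℝ)..1, ((1 - l) * ‖γ₁.z' s‖ + l * ‖γ₂.z' s‖))
        = (1 - l) * γ₁.length + l * γ₂.length := by
      rw [intervalIntegral.integral_add (f := fun s => (1 - l) * ‖γ₁.z' s‖)
        (g := fun s => l * ‖γ₂.z' s‖)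
        ((continuous_const.mul γ₁.hz'.norm).intervalIntegrable 0 1)
        ((continuous_const.mul γ₂.hz'.norm).intervalIntegrable 0 1),
        intervalIntegral.integral_const_mul, intervalIntegral.integral_const_mul]
      rfl
    calc γ.length = ∫ s in (0:ℝ)..1, ‖Zf' s‖ := rfl
      _ ≤ _ := hInt
      _ = _ := hsplit
  refine hlen.trans ?_
  have h1 := le_max_left γ₁.length γ₂.length
  have h2 := le_max_right γ₁.length γ₂.length
  nlinarith

end HeisAux
namespace HeisAux

open Complex

variable {n : ℕ}

/-- Connectivity by horizontal curves (Chow's theorem for the Heisenberg group,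
via an explicit polynomial curve). -/
lemma chow (hn : 0 < n) (a b : Heis n) :
    ∃ γ : Heis.HorizCurve n, γ.z 0 = a.1 ∧ γ.t 0 = a.2 ∧ γ.z 1 = b.1 ∧ γ.t 1 = b.2 := by
  classical
  set u : E n := EuclideanSpace.single (⟨0, hn⟩ : Fin n) (1:ℂ) with hu
  set w : E n := b.1 - a.1 with hw
  set eps : ℝ := (35/2) * ((b.2 - a.2) - 2 * (Heis.herm a.1 w).im) with heps
  set Ec : ℂ := (eps : ℂ) * Complex.I with hEc
  set g : ℝ → ℂ := poly8 0 (1+Ec) (-3-6*Ec) (2+10*Ec) (-(5*Ec)) 0 0 0 0 with hg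
  set gd : ℝ → ℂ := poly8 (1+Ec) (2*(-3-6*Ec)) (3*(2+10*Ec)) (4*(-(5*Ec))) (5*0) (6*0)
    (7*0) (8*0) 0 with hgd
  have hgder : ∀ s : ℝ, HasDerivAt g (gd s) s := fun s => by
    rw [hg, hgd]; exact poly8_hasDerivAt _ _ _ _ _ _ _ _ _ s
  set Zf : ℝ → E n := fun s => a.1 + (s:ℂ) • w + g s • u with hZf
  set Zf' : ℝ → E n := fun s => w + gd s • u with hZf'
  have hzz' : ∀ s : ℝ, Heis.herm (Zf s) (Zf' s) =
      Heis.herm a.1 w + (starRingEnd ℂ) (gd s) * Heis.herm a.1 u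
      + (s:ℂ) * Heis.herm w w + (s:ℂ) * (starRingEnd ℂ) (gd s) * Heis.herm w u
      + g s * Heis.herm u w + g s * (starRingEnd ℂ) (gd s) := by
    intro s
    rw [hZf, hZf']
    simp only [herm_add_left, herm_add_right, herm_smul_left, herm_smul_right]
    rw [hu, herm_single_self]
    ring
  set phi : ℝ → ℂ := fun s =>
      Heis.herm a.1 w * poly8 0 1 0 0 0 0 0 0 0 s
    + Heis.herm w w * poly8 0 0 (1/2) 0 0 0 0 0 0 s
    + Heis.herm a.1 u * poly8 0 (1-Ec) (-3+6*Ec) (2-10*Ec) (5*Ec) 0 0 0 0 s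
    + Heis.herm w u * poly8 0 0 (1/2-Ec/2) (-2+4*Ec) (3/2-(15/2)*Ec) (4*Ec) 0 0 0 s
    + Heis.herm u w * poly8 0 0 (1/2+Ec/2) (-1-2*Ec) (1/2+(5/2)*Ec) (-Ec) 0 0 0 s
    + poly8 0 0 (1/2) (-3) (13/2) (-6) 2 0 0 s
    - Ec^2 * poly8 0 0 (1/2) (-6) 28 (-65) 80 (-50) (25/2) s
    + Ec * poly8 0 0 0 1 (-4) (33/5) (-5) (10/7) 0 s with hphi
  have hphider : ∀ s : ℝ, HasDerivAt phi (Heis.herm (Zf s) (Zf' s)) s := by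
    intro s
    have h :=
      ((((((((poly8_hasDerivAt 0 1 0 0 0 0 0 0 0 s).const_mul (Heis.herm a.1 w)).add
        ((poly8_hasDerivAt 0 0 (1/2) 0 0 0 0 0 0 s).const_mul (Heis.herm w w))).add
        ((poly8_hasDerivAt 0 (1-Ec) (-3+6*Ec) (2-10*Ec) (5*Ec) 0 0 0 0 s).const_mul
          (Heis.herm a.1 u))).add
        ((poly8_hasDerivAt 0 0 (1/2-Ec/2) (-2+4*Ec) (3/2-(15/2)*Ec) (4*Ec) 0 0 0 s).const_mul
          (Heis.herm w u))).add
        ((poly8_hasDerivAt 0 0 (1/2+Ec/2) (-1-2*Ec) (1/2+(5/2)*Ec) (-Ec) 0 0 0 s).const_mul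
          (Heis.herm u w))).add
        (poly8_hasDerivAt 0 0 (1/2) (-3) (13/2) (-6) 2 0 0 s)).sub
        ((poly8_hasDerivAt 0 0 (1/2) (-6) 28 (-65) 80 (-50) (25/2) s).const_mul (Ec^2))).add
        ((poly8_hasDerivAt 0 0 0 1 (-4) (33/5) (-5) (10/7) 0 s).const_mul Ec)
    rw [hphi]
    refine hasDerivAt_deriv_congr h ?_
    rw [hzz' s, hg, hgd]
    simp only [poly8, map_add, map_sub, map_neg, map_mul, map_one, map_ofNat, map_pow,
      map_zero, Complex.conj_ofReal, Complex.conj_I, hEc]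
    ring
  set tf : ℝ → ℝ := fun s => a.2 + 2 * (phi s).im with htf
  have htder : ∀ s : ℝ, HasDerivAt tf (2 * (Heis.herm (Zf s) (Zf' s)).im) s := by
    intro s
    have h2 := Complex.imCLM.hasFDerivAt.comp_hasDerivAt s (hphider s)
    have h3 := (h2.const_mul (2:ℝ)).const_add a.2
    simpa [htf, Function.comp, Complex.imCLM_apply] using h3
  have hzder : ∀ s : ℝ, HasDerivAt Zf (Zf' s) s := by
    intro s
    rw [hZf, hZf']
    have h1 : HasDerivAt (fun y : ℝ => ((y:ℝ):ℂ)) 1 s := by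
      simpa using (hasDerivAt_id ((s:ℝ):ℂ)).comp_ofReal
    have h2 := h1.smul_const w
    have h3 := (hgder s).smul_const u
    have h4 := ((hasDerivAt_const s a.1).add h2).add h3
    exact h4.congr_deriv (by simp)
  have hzcont : Continuous Zf' := by
    rw [hZf', hgd]
    exact continuous_const.add ((poly8_continuous _ _ _ _ _ _ _ _ _).smul continuous_const)
  refine ⟨{ z := Zf, t := tf, z' := Zf', hz := hzder, ht := htder, hz' := hzcont },
    ?_, ?_, ?_, ?_⟩
  · -- z 0 = a.1
    show Zf 0 = a.1
    have hg0 : g 0 = 0 := by rw [hg]; simp [poly8]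
    rw [hZf]
    simp [hg0]
  · -- t 0 = a.2
    show tf 0 = a.2
    have hphi0 : phi 0 = 0 := by rw [hphi]; simp [poly8]
    rw [htf]
    simp [hphi0]
  · -- z 1 = b.1
    show Zf 1 = b.1
    have hg1 : g 1 = 0 := by rw [hg]; simp [poly8]; ring
    rw [hZf]
    simp [hg1, hw]
  · -- t 1 = b.2
    show tf 1 = b.2
    have hphi1 : phi 1 = Heis.herm a.1 w + (1/2) * Heis.herm w w
        + ((eps/35 : ℝ) : ℂ) * Complex.I := by
      rw [hphi, hEc]
      simp only [poly8]
      push_cast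
      ring
    show a.2 + 2 * (phi 1).im = b.2
    rw [hphi1]
    simp only [Complex.add_im, Complex.mul_im, Complex.ofReal_re, Complex.ofReal_im,
      Complex.I_im, Complex.I_re, herm_self_im]
    rw [heps]
    norm_num
    ring_nf

end HeisAux
namespace HeisAux

lemma ccDist_zero_of_dim_zero (a b : Heis 0) : Heis.ccDist a b = 0 := by
  have hvec : ∀ v : EuclideanSpace ℂ (Fin 0), v = 0 := fun v => by ext i; exact i.elim0
  have hlen : ∀ L ∈ S a b, L = 0 := by
    rintro L ⟨γ, _, _, _, _, rfl⟩
    have : ∀ s : ℝ, ‖γ.z' s‖ = 0 := fun s => by rw [hvec (γ.z' s)]; simp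
    unfold Heis.HorizCurve.length
    rw [intervalIntegral.integral_congr (g := fun _ => (0:ℝ)) fun s _ => this s]
    simp
  rw [ccDist_eq]
  by_cases hS : (S a b).Nonempty
  · obtain ⟨L, hL⟩ := hS
    have h0 : (0:ℝ) ∈ S a b := by rw [← hlen L hL]; exact hL
    exact le_antisymm (csInf_le (bddBelow_S a b) h0)
      (le_csInf ⟨L, hL⟩ fun x hx => (hlen x hx).ge)
  · rw [Set.not_nonempty_iff_eq_empty.1 hS, Real.sInf_empty]

lemma S_nonempty {n : ℕ} (hn : 0 < n) (p q : Heis n) : (S p q).Nonempty := by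
  obtain ⟨γ, h1, h2, h3, h4⟩ := chow hn p q
  exact ⟨γ.length, γ, h1, h2, h3, h4, rfl⟩

/-- For positive dimension: the CC distance to a point of a vertical segment is at most the
max of the distances to the endpoints, in a strict/approximate form. -/
lemma ccDist_vseg_lt {n : ℕ} (hn : 0 < n) (c p q x : Heis n) (hz : p.1 = q.1)
    (hx : x ∈ Heis.vseg p q) (M : ℝ)
    (hp : Heis.ccDist c p < M) (hq : Heis.ccDist c q < M) : Heis.ccDist c x < M := by
  obtain ⟨hx1, hx2⟩ := hx
  obtain ⟨L₁, ⟨γ₁, e1, e2, e3, e4, rfl⟩, hL₁⟩ :=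
    exists_lt_of_csInf_lt (S_nonempty hn c p) hp
  obtain ⟨L₂, ⟨γ₂, f1, f2, f3, f4, rfl⟩, hL₂⟩ :=
    exists_lt_of_csInf_lt (S_nonempty hn c q) hq
  obtain ⟨γ, k1, k2, k3, k4, k5⟩ := interp γ₁ γ₂ (by rw [e1, f1]) (by rw [e2, f2])
    (by rw [e3, f3, hz]) x.2 (by rw [e4, f4]; exact hx2)
  have hmem : γ.length ∈ S c x :=
    ⟨γ, by rw [k1, e1], by rw [k2, e2], by rw [k3, e3, ← hx1], k4, rfl⟩
  calc Heis.ccDist c x ≤ γ.length := csInf_le (bddBelow_S c x) hmem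
    _ ≤ max γ₁.length γ₂.length := k5
    _ < M := max_lt hL₁ hL₂

end HeisAux

/-- Any (open or closed) CC-ball contains the vertical segment joining any two of its
points with the same `ℂⁿ`-component. -/
theorem stmt8 (n : ℕ) (c : Heis n) (r : ℝ) (B : Set (Heis n))
    (hB : B = Heis.ccBall c r ∨ B = Heis.ccClosedBall c r)
    (p q : Heis n) (hp : p ∈ B) (hq : q ∈ B) (hz : p.1 = q.1) :
    Heis.vseg p q ⊆ B := by
  rcases Nat.eq_zero_or_pos n with hn | hn
  · -- dimension 0 : all CC distances vanish
    subst hn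
    intro x _
    rcases hB with rfl | rfl
    · have hp' : Heis.ccDist c p < r := hp
      rw [HeisAux.ccDist_zero_of_dim_zero] at hp'
      show Heis.ccDist c x < r
      rw [HeisAux.ccDist_zero_of_dim_zero]
      exact hp'
    · have hp' : Heis.ccDist c p ≤ r := hp
      rw [HeisAux.ccDist_zero_of_dim_zero] at hp'
      show Heis.ccDist c x ≤ r
      rw [HeisAux.ccDist_zero_of_dim_zero]
      exact hp'
  · intro x hx
    rcases hB with rfl | rfl
    · exact HeisAux.ccDist_vseg_lt hn c p q x hz hx r hp hq
    · show Heis.ccDist c x ≤ r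
      have hp' : Heis.ccDist c p ≤ r := hp
      have hq' : Heis.ccDist c q ≤ r := hq
      refine le_of_forall_pos_le_add fun ε hε => ?_
      exact le_of_lt (HeisAux.ccDist_vseg_lt hn c p q x hz hx (r + ε)
        (lt_of_le_of_lt hp' (by linarith)) (lt_of_le_of_lt hq' (by linarith)))
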